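/- Let (aₙ) be a sequence of real numbers with the weak sub-additivity property: for every C₁ > 1 there exists C₀ ≥ 0 such that for all q ≥ 2 and all m₁,…,m_q ≥ 0, a_{m₁+⋯+m_q} ≤ C₁·(a_{m₁}+⋯+a_{m_q}) + q·C₀. Then liminf_{n→∞} aₙ/n = limsup_{n→∞} aₙ/n. -/
import Mathlib

open Filter

private lemma ereal_le_of_forall_eps (x : EReal) (b : ℝ)
    (h : ∀ ε : ℝ, 0 < ε → x ≤ ((b + ε : ℝ) : EReal)) : x ≤ (b : EReal) := by
  by_contra hc
  push_neg at hc
  obtain ⟨r, hr1, hr2⟩ := EReal.lt_iff_exists_real_btwn.1 hc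
  have hbr : b < r := by exact_mod_cast hr1
  have h2 := h (r - b) (by linarith)
  rw [show b + (r - b) = r by ring] at h2
  exact absurd (h2.trans_lt hr2) (lt_irrefl _)

private lemma ereal_le_bot_of_forall (x : EReal) (h : ∀ y : ℝ, x ≤ (y : EReal)) :
    x ≤ ⊥ := by
  by_contra hc
  push_neg at hc
  obtain ⟨r, _, hr2⟩ := EReal.lt_iff_exists_real_btwn.1 hc
  exact absurd ((h r).trans_lt hr2) (lt_irrefl _)

private lemma key_ev (a : ℕ → ℝ) (C₁ C₀ : ℝ) (hC₁ : 1 < C₁) (hC₀ : 0 ≤ C₀)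
    (hsub : ∀ (q : ℕ), 2 ≤ q → ∀ m : Fin q → ℕ,
      a (∑ i, m i) ≤ C₁ * ∑ i, a (m i) + q * C₀)
    (k : ℕ) (hk : 1 ≤ k) (δ : ℝ) (hδ : 0 < δ) :
    ∀ᶠ n : ℕ in atTop, a n / n ≤ C₁ * (a k / k) + C₀ / k + δ := by
  have hk0 : 0 < k := hk
  have hkR : (0:ℝ) < k := by exact_mod_cast hk0
  have hC₁0 : (0:ℝ) < C₁ := by linarith
  set M : ℝ := (Finset.range k).sup' (Finset.nonempty_range_iff.2 (by omega)) a with hM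
  obtain ⟨N, hN⟩ := exists_nat_gt ((C₁ * |a k| + C₁ * M + C₀) / δ)
  filter_upwards [eventually_ge_atTop (max k N)] with n hn
  have hnk : k ≤ n := le_trans (le_max_left _ _) hn
  have hnN : N ≤ n := le_trans (le_max_right _ _) hn
  have hn0 : 0 < n := lt_of_lt_of_le hk0 hnk
  have hnR : (0:ℝ) < n := by exact_mod_cast hn0
  set q := n / k with hqdef
  set r := n % k with hrdef
  have hq1 : 1 ≤ q := (Nat.one_le_div_iff hk0).2 hnk
  have hdm : k * q + r = n := Nat.div_add_mod n k
  have hrk : r < k := Nat.mod_lt n hk0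
  have hmain : a n ≤ C₁ * ((q:ℝ) * a k + a r) + ((q:ℝ)+1) * C₀ := by
    have h := hsub (q+1) (by omega) (fun i => if (i:ℕ) < q then k else r)
    have hcs : ∀ i : Fin q, (if ((i.castSucc : Fin (q+1)) : ℕ) < q then k else r) = k := by
      intro i; rw [Fin.coe_castSucc, if_pos i.isLt]
    have hcs' : ∀ i : Fin q, a (if ((i.castSucc : Fin (q+1)) : ℕ) < q then k else r) = a k := by
      intro i; rw [hcs i]
    have hs1 : ∑ i : Fin (q+1), (if ((i:ℕ) < q) then k else r) = n := by
      rw [Fin.sum_univ_castSucc]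
      simp only [hcs, Fin.val_last, lt_irrefl, if_false, Finset.sum_const,
        Finset.card_univ, Fintype.card_fin, smul_eq_mul]
      rw [Nat.mul_comm]; exact hdm
    have hs2 : ∑ i : Fin (q+1), a (if ((i:ℕ) < q) then k else r) = (q:ℝ) * a k + a r := by
      rw [Fin.sum_univ_castSucc]
      simp only [hcs', Fin.val_last, lt_irrefl, if_false, Finset.sum_const,
        Finset.card_univ, Fintype.card_fin, nsmul_eq_mul]
    rw [hs1, hs2] at h
    convert h using 2
    push_cast; ring
  have hQ1 : (q:ℝ) * k ≤ n := by exact_mod_cast Nat.div_mul_le_self n k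
  have hn_lt : n < q * k + k := by
    calc n = k * q + r := hdm.symm
    _ < k * q + k := Nat.add_lt_add_left hrk _
    _ = q * k + k := by ring
  have hQ2 : (n:ℝ) < (q:ℝ) * k + k := by exact_mod_cast hn_lt
  have hMle : a r ≤ M := Finset.le_sup' a (Finset.mem_range.2 hrk)
  have hδn : C₁ * |a k| + C₁ * M + C₀ ≤ δ * n := by
    rw [div_lt_iff₀ hδ] at hN
    have h2 : (N:ℝ) ≤ n := by exact_mod_cast hnN
    nlinarith
  have e1 : C₁ * ((q:ℝ) * k) * a k ≤ C₁ * n * a k + C₁ * k * |a k| := by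
    clear hmain hMle hδn hM hN hn
    rcases le_or_gt 0 (a k) with h | h
    · rw [abs_of_nonneg h]
      nlinarith [mul_nonneg (mul_nonneg hC₁0.le h) (sub_nonneg.2 hQ1),
        mul_nonneg (mul_nonneg hC₁0.le hkR.le) h]
    · rw [abs_of_neg h]
      nlinarith [mul_nonneg (mul_nonneg hC₁0.le (by linarith : (0:ℝ) ≤ (q:ℝ)*k + k - n)) (by linarith : (0:ℝ) ≤ -a k)]
  have hrhs : C₁ * (a k / k) + C₀ / k + δ = (C₁ * a k + C₀ + δ * k) / k := by
    field_simp
  rw [hrhs, div_le_div_iff₀ hnR hkR]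
  have hmul := mul_le_mul_of_nonneg_left hmain hkR.le
  have habs : a k ≤ |a k| := le_abs_self (a k)
  nlinarith [mul_le_mul_of_nonneg_left hMle (mul_pos hC₁0 hkR).le,
    mul_le_mul_of_nonneg_left hδn hkR.le, mul_le_mul_of_nonneg_right hQ1 hC₀]

private lemma limsup_key (a : ℕ → ℝ) (C₁ C₀ : ℝ) (hC₁ : 1 < C₁) (hC₀ : 0 ≤ C₀)
    (hsub : ∀ (q : ℕ), 2 ≤ q → ∀ m : Fin q → ℕ,
      a (∑ i, m i) ≤ C₁ * ∑ i, a (m i) + q * C₀)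
    (k : ℕ) (hk : 1 ≤ k) (δ : ℝ) (hδ : 0 < δ) :
    limsup (fun n : ℕ => ((a n / n : ℝ) : EReal)) atTop
      ≤ ((C₁ * (a k / k) + C₀ / k + δ : ℝ) : EReal) := by
  refine limsup_le_of_le (by isBoundedDefault) ?_
  filter_upwards [key_ev a C₁ C₀ hC₁ hC₀ hsub k hk δ hδ] with n hn
  exact_mod_cast hn

theorem stmt3 (a : ℕ → ℝ)
    (hsub : ∀ C₁ : ℝ, 1 < C₁ → ∃ C₀ : ℝ, 0 ≤ C₀ ∧ ∀ (q : ℕ), 2 ≤ q →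
      ∀ m : Fin q → ℕ, a (∑ i, m i) ≤ C₁ * ∑ i, a (m i) + q * C₀) :
    Filter.liminf (fun n : ℕ => ((a n / n : ℝ) : EReal)) Filter.atTop =
      Filter.limsup (fun n : ℕ => ((a n / n : ℝ) : EReal)) Filter.atTop := by
  set L := Filter.liminf (fun n : ℕ => ((a n / n : ℝ) : EReal)) Filter.atTop with hLdef
  set S := Filter.limsup (fun n : ℕ => ((a n / n : ℝ) : EReal)) Filter.atTop with hSdef
  refine le_antisymm liminf_le_limsup ?_
  -- main estimate
  have hS : ∀ c : ℝ, L < (c : EReal) → ∀ C₁ : ℝ, 1 < C₁ → ∀ δ : ℝ, 0 < δ →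
      S ≤ ((C₁ * c + δ : ℝ) : EReal) := by
    intro c hc C₁ hC₁ δ hδ
    obtain ⟨C₀, hC₀, hq⟩ := hsub C₁ hC₁
    have hfreq : ∃ᶠ k in atTop, ((a k / k : ℝ) : EReal) < (c : EReal) :=
      frequently_lt_of_liminf_lt (by isBoundedDefault) hc
    obtain ⟨K, hK⟩ := exists_nat_gt (2 * C₀ / δ)
    obtain ⟨k, hkK, hkc⟩ := frequently_atTop.1 hfreq (max 1 K)
    have hk1 : 1 ≤ k := le_trans (le_max_left _ _) hkK
    have hkR : (0:ℝ) < k := by exact_mod_cast hk1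
    have hck : a k / k < c := by exact_mod_cast hkc
    have hC0k : C₀ / k ≤ δ / 2 := by
      have hKk : (K:ℝ) ≤ k := by exact_mod_cast le_trans (le_max_right _ _) hkK
      rw [div_lt_iff₀ hδ] at hK
      rw [div_le_iff₀ hkR]
      nlinarith
    have hkey := limsup_key a C₁ C₀ hC₁ hC₀ hq k hk1 (δ/2) (by linarith)
    refine hkey.trans ?_
    have : C₁ * (a k / k) + C₀ / k + δ/2 ≤ C₁ * c + δ := by
      have := mul_le_mul_of_nonneg_left hck.le (by linarith : (0:ℝ) ≤ C₁)
      linarith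
    exact_mod_cast this
  rcases eq_or_ne L ⊤ with h | h
  · rw [h]; exact le_top
  rcases eq_or_ne L ⊥ with hb | hb
  · rw [hb]
    apply ereal_le_bot_of_forall
    intro y
    have hlt : L < ((y-1)/2 : ℝ) := by
      rw [hb]; exact bot_lt_iff_ne_bot.2 (EReal.coe_ne_bot _)
    have h2 := hS _ hlt 2 (by norm_num) 1 one_pos
    refine h2.trans ?_
    exact_mod_cast le_of_eq (by ring : 2 * ((y-1)/2) + 1 = y)
  · obtain ⟨l, hl⟩ : ∃ l : ℝ, L = (l : EReal) := ⟨L.toReal, (EReal.coe_toReal h hb).symm⟩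
    rw [hl]
    apply ereal_le_of_forall_eps
    intro ε hε
    set η := min 1 (ε/(4*(|l|+1))) with hηdef
    have hpos : (0:ℝ) < 4*(|l|+1) := by positivity
    have hη0 : 0 < η := lt_min one_pos (by positivity)
    have hη1 : η ≤ 1 := min_le_left _ _
    have hη2 : η * (4*(|l|+1)) ≤ ε := by
      have := min_le_right 1 (ε/(4*(|l|+1)))
      rw [← le_div_iff₀ hpos]; exact this
    have hlt : L < ((l + ε/4 : ℝ) : EReal) := by
      rw [hl]; exact_mod_cast (by linarith : l < l + ε/4)
    have h2 := hS _ hlt (1+η) (by linarith) (ε/4) (by linarith)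
    refine h2.trans ?_
    have : (1+η) * (l + ε/4) + ε/4 ≤ l + ε := by
      nlinarith [mul_nonneg hη0.le (sub_nonneg.2 (le_abs_self l)),
        mul_nonneg (sub_nonneg.2 hη1) hε.le, abs_nonneg l]
    exact_mod_cast this
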